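/- Let α be a vine function on a lower set L ⊆ ext(G,D), and let V₁, V₂ ∈ ext(G,D) be such that: (a) E(V_i, V_i^c) ∩ |α| = ∅ for i = 1, 2; and (b) every V ∈ ext(G,D) with V ⊆ V₁ ∩ V₂ belongs to L. Then V₁ ∪ V₂ = ι; consequently E(V₁,V₁^c) ∩ E(V₂,V₂^c) = ∅. -/

import Mathlib

namespace Paper

variable {ι Ed : Type*}

/-- The set of edges with one endpoint in `V` and the other in `W`
(a loop at `v` belongs to it iff `v ∈ V ∩ W`). -/
def edgesBetween (ends : Ed → Sym2 ι) (V W : Set ι) : Set Ed :=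
  {e | ∃ a b, ends e = s(a, b) ∧ a ∈ V ∧ b ∈ W}

/-- A set of vertices is connected if it is nonempty and the induced multigraph
on it is connected. -/
def IsConnectedOn (ends : Ed → Sym2 ι) (V : Set ι) : Prop :=
  V.Nonempty ∧ ∀ u ∈ V, ∀ w ∈ V,
    Relation.ReflTransGen (fun a b => a ∈ V ∧ b ∈ V ∧ ∃ e, ends e = s(a, b)) u w

/-- `β^⋆(V) = ∑_{v ∈ V} (φ^⋆(v) - D(v)) + |E(V,V^c)|/2`. -/
noncomputable def beta (ends : Ed → Sym2 ι) (D : ι → ℤ) (φ : ι → ℝ) (V : Set ι) : ℝ :=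
  (∑ᶠ v ∈ V, (φ v - (D v : ℝ))) + ((edgesBetween ends V Vᶜ).ncard : ℝ) / 2

/-- `β⁰ = (β⁺ + β⁻)/2`. -/
noncomputable def betaZero (ends : Ed → Sym2 ι) (D : ι → ℤ) (φp φm : ι → ℝ) (V : Set ι) : ℝ :=
  (beta ends D φp V + beta ends D φm V) / 2

/-- A subset `∅ ⊊ V ⊊ ι` is extremal if `β⁺(V) > 0` and `β⁻(V) < 0`. -/
def Extremal (ends : Ed → Sym2 ι) (D : ι → ℤ) (φp φm : ι → ℝ) (V : Set ι) : Prop :=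
  V.Nonempty ∧ V ≠ Set.univ ∧ 0 < beta ends D φp V ∧ beta ends D φm V < 0

/-- `ext(G,D)`: extremal subsets which are connected with connected complement. -/
def extSet (ends : Ed → Sym2 ι) (D : ι → ℤ) (φp φm : ι → ℝ) : Set (Set ι) :=
  {V | Extremal ends D φp φm V ∧ IsConnectedOn ends V ∧ IsConnectedOn ends Vᶜ}

/-- `nex(V') = ⋂ {V ∈ V_• : V' ⊊ V}` (the empty intersection being everything). -/
def nex (Vb : Set (Set ι)) (V' : Set ι) : Set ι :=
  ⋂₀ {V | V ∈ Vb ∧ V' ⊂ V}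

/-- A full forest in `ext(G,D)`. -/
def IsFullForest (ends : Ed → Sym2 ι) (D : ι → ℤ) (φp φm : ι → ℝ)
    (Vb : Set (Set ι)) : Prop :=
  Vb ⊆ extSet ends D φp φm ∧
  (∀ V ∈ Vb, IsChain (· ⊆ ·) {W | W ∈ Vb ∧ W ⊆ V}) ∧
  (∀ V ∈ extSet ends D φp φm,
    (∀ W ∈ extSet ends D φp φm, V ⊆ W → V = W) → V ∈ Vb) ∧
  (∀ e : Ed, ∃ V ∈ Vb, e ∈ edgesBetween ends V Vᶜ)

/-- `L` is a lower subset of `ext`. -/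
def IsLowerSubset (ext L : Set (Set ι)) : Prop :=
  L ⊆ ext ∧ ∀ V ∈ L, ∀ W ∈ ext, W ⊆ V → W ∈ L

/-- A vine function on a lower set `L ⊆ ext`. -/
def IsVineFunction (ends : Ed → Sym2 ι) (ext L : Set (Set ι))
    (α : Set ι → Set Ed) : Prop :=
  (∀ V ∈ L, α V ⊆ edgesBetween ends V Vᶜ) ∧
  ∀ V ∈ L, (α V = ∅ ↔
    ∃ V' ∈ ext, V' ⊂ V ∧ (α V' ∩ edgesBetween ends V Vᶜ).Nonempty)

/-- A full vine function: a vine function with `L = ext` whose values cover all edges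
(extended by `∅` outside `ext`). -/
def IsFullVine (ends : Ed → Sym2 ι) (ext : Set (Set ι)) (α : Set ι → Set Ed) : Prop :=
  IsVineFunction ends ext ext α ∧ (⋃ V ∈ ext, α V) = (Set.univ : Set Ed) ∧
  ∀ V ∉ ext, α V = ∅

/-- The vine function associated to a full forest:
`α_{V_•}(V) = E(V, nex(V) \ V)` for `V ∈ V_•`, and `∅` otherwise. -/
def alphaOf (ends : Ed → Sym2 ι) (Vb : Set (Set ι)) (V : Set ι) : Set Ed :=
  {e | V ∈ Vb ∧ e ∈ edgesBetween ends V (nex Vb V \ V)}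



section Helpers

open Relation Set

variable {ι Ed : Type*}

lemma mem_edgesBetween_iff {ends : Ed → Sym2 ι} {e : Ed} {x y : ι}
    (h : ends e = s(x, y)) {V W : Set ι} :
    e ∈ edgesBetween ends V W ↔ (x ∈ V ∧ y ∈ W) ∨ (y ∈ V ∧ x ∈ W) := by
  constructor
  · rintro ⟨a, b, hab, ha, hb⟩
    have hxy : s(x, y) = s(a, b) := h.symm.trans hab
    rw [Sym2.eq_iff] at hxy
    rcases hxy with ⟨rfl, rfl⟩ | ⟨rfl, rfl⟩
    · exact Or.inl ⟨ha, hb⟩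
    · exact Or.inr ⟨ha, hb⟩
  · rintro (⟨hx, hy⟩ | ⟨hy, hx⟩)
    · exact ⟨x, y, h, hx, hy⟩
    · exact ⟨y, x, h.trans (Sym2.eq_swap), hy, hx⟩

open Classical in
lemma ncard_eq_sum [Fintype Ed] (s : Set Ed) :
    s.ncard = ∑ e : Ed, if e ∈ s then 1 else 0 := by
  classical
  rw [Set.ncard_eq_toFinset_card' s, ← Finset.card_filter]
  congr 1; ext e; simp

lemma cut_identity [Fintype Ed] (ends : Ed → Sym2 ι) (A B : Set ι) :
    (edgesBetween ends (A ∩ B) (A ∩ B)ᶜ).ncard + (edgesBetween ends (A ∪ B) (A ∪ B)ᶜ).ncard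
      + 2 * (edgesBetween ends (A \ B) (B \ A)).ncard
    = (edgesBetween ends A Aᶜ).ncard + (edgesBetween ends B Bᶜ).ncard := by
  classical
  simp only [ncard_eq_sum, Finset.mul_sum, ← Finset.sum_add_distrib]
  apply Finset.sum_congr rfl
  intro e _
  obtain ⟨⟨x, y⟩, hxy⟩ : ∃ p : ι × ι, s(p.1, p.2) = ends e := ⟨(ends e).out, (ends e).out_eq⟩
  have h : ends e = s(x, y) := hxy.symm
  rw [mem_edgesBetween_iff h, mem_edgesBetween_iff h, mem_edgesBetween_iff h,
    mem_edgesBetween_iff h, mem_edgesBetween_iff h]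
  by_cases hxA : x ∈ A <;> by_cases hxB : x ∈ B <;> by_cases hyA : y ∈ A <;> by_cases hyB : y ∈ B <;>
    simp [hxA, hxB, hyA, hyB]

lemma finsum_modular [Fintype ι] (f : ι → ℝ) (A B : Set ι) :
    (∑ᶠ v ∈ A ∩ B, f v) + (∑ᶠ v ∈ A ∪ B, f v) = (∑ᶠ v ∈ A, f v) + (∑ᶠ v ∈ B, f v) := by
  classical
  rw [show A = (A.toFinset : Set ι) from (Set.coe_toFinset A).symm,
    show B = (B.toFinset : Set ι) from (Set.coe_toFinset B).symm,
    ← Finset.coe_inter, ← Finset.coe_union,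
    finsum_mem_coe_finset, finsum_mem_coe_finset, finsum_mem_coe_finset, finsum_mem_coe_finset,
    add_comm (∑ v ∈ _ ∩ _, f v)]
  exact Finset.sum_union_inter

lemma beta_modular [Fintype ι] [Fintype Ed] (ends : Ed → Sym2 ι) (D : ι → ℤ) (φ : ι → ℝ)
    (A B : Set ι) :
    beta ends D φ (A ∩ B) + beta ends D φ (A ∪ B)
      + ((edgesBetween ends (A \ B) (B \ A)).ncard : ℝ)
    = beta ends D φ A + beta ends D φ B := by
  have h1 := finsum_modular (fun v => φ v - (D v : ℝ)) A B
  have h2 := cut_identity ends A B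
  have h2' : ((edgesBetween ends (A ∩ B) (A ∩ B)ᶜ).ncard : ℝ)
      + ((edgesBetween ends (A ∪ B) (A ∪ B)ᶜ).ncard : ℝ)
      + 2 * ((edgesBetween ends (A \ B) (B \ A)).ncard : ℝ)
    = ((edgesBetween ends A Aᶜ).ncard : ℝ) + ((edgesBetween ends B Bᶜ).ncard : ℝ) := by
    exact_mod_cast congrArg (Nat.cast : ℕ → ℝ) h2
  simp only [beta]
  linarith

lemma beta_empty [Fintype ι] [Fintype Ed] (ends : Ed → Sym2 ι) (D : ι → ℤ) (φ : ι → ℝ) :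
    beta ends D φ (∅ : Set ι) = 0 := by
  have h : edgesBetween ends (∅ : Set ι) (∅ : Set ι)ᶜ = ∅ := by
    ext e; simp [edgesBetween]
  rw [beta, h]; simp

lemma beta_union_disjoint [Fintype ι] [Fintype Ed] (ends : Ed → Sym2 ι) (D : ι → ℤ)
    (φ : ι → ℝ) {A B : Set ι}
    (hd : Disjoint A B) (he : edgesBetween ends A B = ∅) :
    beta ends D φ (A ∪ B) = beta ends D φ A + beta ends D φ B := by
  have h := beta_modular ends D φ A B
  rw [hd.inter_eq, beta_empty, hd.sdiff_eq_left, hd.symm.sdiff_eq_left, he] at h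
  simpa using h

lemma rel_symm (ends : Ed → Sym2 ι) (V : Set ι) :
    Symmetric (fun a b => a ∈ V ∧ b ∈ V ∧ ∃ e, ends e = s(a, b)) := by
  rintro a b ⟨ha, hb, e, he⟩
  exact ⟨hb, ha, e, he.trans (Sym2.eq_swap)⟩

lemma rel_mono {ends : Ed → Sym2 ι} {V W : Set ι} (h : V ⊆ W) {a b : ι}
    (hr : Relation.ReflTransGen (fun a b => a ∈ V ∧ b ∈ V ∧ ∃ e, ends e = s(a, b)) a b) :
    Relation.ReflTransGen (fun a b => a ∈ W ∧ b ∈ W ∧ ∃ e, ends e = s(a, b)) a b :=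
  Relation.ReflTransGen.mono (fun a b (hab : a ∈ V ∧ b ∈ V ∧ ∃ e, ends e = s(a, b)) =>
    (⟨h hab.1, h hab.2.1, hab.2.2⟩ : a ∈ W ∧ b ∈ W ∧ ∃ e, ends e = s(a, b))) a b hr

lemma isConnectedOn_union {ends : Ed → Sym2 ι} {A B : Set ι}
    (hA : IsConnectedOn ends A) (hB : IsConnectedOn ends B) (h : (A ∩ B).Nonempty) :
    IsConnectedOn ends (A ∪ B) := by
  obtain ⟨z, hzA, hzB⟩ := h
  refine ⟨⟨z, Or.inl hzA⟩, ?_⟩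
  have key : ∀ u ∈ A ∪ B, Relation.ReflTransGen
      (fun a b => a ∈ A ∪ B ∧ b ∈ A ∪ B ∧ ∃ e, ends e = s(a, b)) u z := by
    rintro u (hu | hu)
    · exact rel_mono Set.subset_union_left (hA.2 u hu z hzA)
    · exact rel_mono Set.subset_union_right (hB.2 u hu z hzB)
  intro u hu w hw
  exact (key u hu).trans ((@Relation.ReflTransGen.stdSymm _ _ ⟨fun _ _ h => rel_symm ends _ h⟩).symm _ _ (key w hw))

lemma isConnectedOn_compl {ends : Ed → Sym2 ι} {U W : Set ι}
    (hconn : IsConnectedOn ends (Set.univ : Set ι))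
    (hWU : W ⊆ U) (hE : edgesBetween ends W (U \ W) = ∅)
    (hUc : IsConnectedOn ends Uᶜ) :
    IsConnectedOn ends Wᶜ := by
  have hsub : Uᶜ ⊆ Wᶜ := Set.compl_subset_compl.mpr hWU
  obtain ⟨z, hz⟩ := hUc.1
  have key : ∀ x, x ∈ Wᶜ → ∃ y ∈ Uᶜ, Relation.ReflTransGen
      (fun a b => a ∈ Wᶜ ∧ b ∈ Wᶜ ∧ ∃ e, ends e = s(a, b)) x y := by
    intro x hxW
    have hpath : Relation.ReflTransGen
        (fun a b => a ∈ (Set.univ : Set ι) ∧ b ∈ (Set.univ : Set ι) ∧ ∃ e, ends e = s(a, b)) x z :=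
      hconn.2 x (Set.mem_univ x) z (Set.mem_univ z)
    revert hxW
    induction hpath using Relation.ReflTransGen.head_induction_on with
    | refl => exact fun _ => ⟨z, hz, Relation.ReflTransGen.refl⟩
    | @head a c hac hcz ih =>
      intro haW
      by_cases haU : a ∈ Uᶜ
      · exact ⟨a, haU, Relation.ReflTransGen.refl⟩
      · have haU' : a ∈ U := by simpa using haU
        obtain ⟨-, -, e, he⟩ := hac
        have hcW : c ∈ Wᶜ := by
          intro hcW
          have : e ∈ edgesBetween ends W (U \ W) :=
            ⟨c, a, he.trans (Sym2.eq_swap), hcW, haU', haW⟩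
          rw [hE] at this
          exact this
        obtain ⟨y, hy, hp⟩ := ih hcW
        exact ⟨y, hy, Relation.ReflTransGen.head ⟨haW, hcW, e, he⟩ hp⟩
  refine ⟨⟨z, hsub hz⟩, ?_⟩
  intro u hu w hw
  obtain ⟨y₁, hy₁, p₁⟩ := key u hu
  obtain ⟨y₂, hy₂, p₂⟩ := key w hw
  have pmid : Relation.ReflTransGen
      (fun a b => a ∈ Wᶜ ∧ b ∈ Wᶜ ∧ ∃ e, ends e = s(a, b)) y₁ y₂ :=
    rel_mono hsub (hUc.2 y₁ hy₁ y₂ hy₂)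
  exact (p₁.trans pmid).trans ((@Relation.ReflTransGen.stdSymm _ _ ⟨fun _ _ h => rel_symm ends _ h⟩).symm _ _ p₂)

lemma exists_neg_component [Fintype ι] [Fintype Ed] (ends : Ed → Sym2 ι) (D : ι → ℤ)
    (φ : ι → ℝ) :
    ∀ (n : ℕ) (S : Set ι), S.ncard ≤ n → S.Nonempty → beta ends D φ S < 0 →
    ∃ W, W ⊆ S ∧ W.Nonempty ∧ IsConnectedOn ends W ∧
      edgesBetween ends W (S \ W) = ∅ ∧ beta ends D φ W < 0 := by
  intro n
  induction n with
  | zero =>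
    intro S hcard hne _
    exact absurd (Set.ncard_pos (Set.toFinite S) |>.mpr hne) (by omega)
  | succ n ih =>
    intro S hcard hne hneg
    obtain ⟨u, hu⟩ := hne
    set r : ι → ι → Prop := fun a b => a ∈ S ∧ b ∈ S ∧ ∃ e, ends e = s(a, b) with hr
    set W : Set ι := {x | x ∈ S ∧ Relation.ReflTransGen r u x} with hW
    have hWS : W ⊆ S := fun x hx => hx.1
    have huW : u ∈ W := ⟨hu, Relation.ReflTransGen.refl⟩
    have hEW : edgesBetween ends W (S \ W) = ∅ := by
      ext e
      simp only [Set.mem_empty_iff_false, iff_false]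
      rintro ⟨a, b, he, haW, hbS, hbW⟩
      exact hbW ⟨hbS, haW.2.tail ⟨haW.1, hbS, e, he⟩⟩
    have hWconn : IsConnectedOn ends W := by
      refine ⟨⟨u, huW⟩, ?_⟩
      have reach : ∀ x, Relation.ReflTransGen r u x → Relation.ReflTransGen
          (fun a b => a ∈ W ∧ b ∈ W ∧ ∃ e, ends e = s(a, b)) u x := by
        intro x hx
        induction hx with
        | refl => exact Relation.ReflTransGen.refl
        | @tail b c hb hbc ihp =>
          exact ihp.tail ⟨⟨hbc.1, hb⟩, ⟨hbc.2.1, hb.tail hbc⟩, hbc.2.2⟩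
      intro x hx y hy
      exact ((@Relation.ReflTransGen.stdSymm _ _ ⟨fun _ _ h => rel_symm ends W h⟩).symm _ _ (reach x hx.2)).trans
        (reach y hy.2)
    have hdisj : Disjoint W (S \ W) := Set.disjoint_sdiff_right.mono_left le_rfl
    have hunion : W ∪ (S \ W) = S := Set.union_diff_cancel hWS
    have hsplit : beta ends D φ S = beta ends D φ W + beta ends D φ (S \ W) := by
      have h := beta_union_disjoint ends D φ hdisj hEW
      rwa [hunion] at h
    by_cases hWneg : beta ends D φ W < 0
    · exact ⟨W, hWS, ⟨u, huW⟩, hWconn, hEW, hWneg⟩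
    · have hSWneg : beta ends D φ (S \ W) < 0 := by linarith [hsplit, not_lt.mp hWneg]
      have hSWne : (S \ W).Nonempty := by
        rcases Set.eq_empty_or_nonempty (S \ W) with h | h
        · rw [h, beta_empty] at hSWneg; linarith
        · exact h
      have hcard' : (S \ W).ncard ≤ n := by
        have h1 : (S \ W).ncard < S.ncard := by
          apply Set.ncard_lt_ncard _ (Set.toFinite S)
          exact ⟨Set.diff_subset, fun hsub => (hsub (hWS huW) |>.2) huW⟩
        omega
      obtain ⟨W', hW'sub, hW'ne, hW'conn, hW'E, hW'neg⟩ := ih (S \ W) hcard' hSWne hSWneg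
      refine ⟨W', hW'sub.trans Set.diff_subset, hW'ne, hW'conn, ?_, hW'neg⟩
      ext e
      simp only [Set.mem_empty_iff_false, iff_false]
      rintro ⟨a, b, he, haW', hbS, hbW'⟩
      by_cases hbW : b ∈ W
      · have : e ∈ edgesBetween ends W (S \ W) :=
          ⟨b, a, he.trans (Sym2.eq_swap), hbW, hW'sub haW'⟩
        rw [hEW] at this; exact this
      · have : e ∈ edgesBetween ends W' ((S \ W) \ W') :=
          ⟨a, b, he, haW', ⟨hbS, hbW⟩, hbW'⟩
        rw [hW'E] at this; exact this

end Helpers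

/-- Proposition (transversal self-intersection): let `α` be a vine function
on a lower set `L`, and `V₁, V₂ ∈ ext(G,D)` with `E(Vᵢ,Vᵢ^c) ∩ |α| = ∅` and
such that every element of `ext(G,D)` contained in `V₁ ∩ V₂` lies in `L`.
Then `V₁ ∪ V₂ = ι`, and consequently `E(V₁,V₁^c) ∩ E(V₂,V₂^c) = ∅`. -/
theorem vine_transversal {ι Ed : Type*} [Fintype ι] [Fintype Ed]
    (ends : Ed → Sym2 ι) (D : ι → ℤ) (φp φm : ι → ℝ)
    (hconn : IsConnectedOn ends (Set.univ : Set ι))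
    (hA : ∀ V : Set ι, V.Nonempty → V ≠ Set.univ → 0 < beta ends D φp V)
    (hB : ∀ V : Set ι, 0 ≤ betaZero ends D φp φm V)
    (hC : ∀ V : Set ι, beta ends D φm V < 0 → betaZero ends D φp φm V = 0)
    (v₁ : ι) (hstar : ∀ V : Set ι, Extremal ends D φp φm V → v₁ ∈ V)
    (L : Set (Set ι)) (hL : IsLowerSubset (extSet ends D φp φm) L)
    (α : Set ι → Set Ed) (hα : IsVineFunction ends (extSet ends D φp φm) L α)
    (V₁ V₂ : Set ι)
    (h₁ : V₁ ∈ extSet ends D φp φm) (h₂ : V₂ ∈ extSet ends D φp φm)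
    (ha₁ : edgesBetween ends V₁ V₁ᶜ ∩ (⋃ V ∈ L, α V) = ∅)
    (ha₂ : edgesBetween ends V₂ V₂ᶜ ∩ (⋃ V ∈ L, α V) = ∅)
    (hb : ∀ V ∈ extSet ends D φp φm, V ⊆ V₁ ∩ V₂ → V ∈ L) :
    V₁ ∪ V₂ = Set.univ ∧
    edgesBetween ends V₁ V₁ᶜ ∩ edgesBetween ends V₂ V₂ᶜ = ∅ := by
  classical
  obtain ⟨hex₁, hc₁, hcc₁⟩ := h₁
  obtain ⟨hex₂, hc₂, hcc₂⟩ := h₂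
  have hne₁ := hex₁.1
  have hnu₁ := hex₁.2.1
  have hm₁ := hex₁.2.2.2
  have hm₂ := hex₂.2.2.2
  have hz₁ : betaZero ends D φp φm V₁ = 0 := hC V₁ hm₁
  have hz₂ : betaZero ends D φp φm V₂ = 0 := hC V₂ hm₂
  have hmodp := beta_modular ends D φp V₁ V₂
  have hmodm := beta_modular ends D φm V₁ V₂
  have hBU := hB (V₁ ∩ V₂)
  have hBun := hB (V₁ ∪ V₂)
  have hdnn : (0 : ℝ) ≤ ((edgesBetween ends (V₁ \ V₂) (V₂ \ V₁)).ncard : ℝ) :=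
    Nat.cast_nonneg _
  have hd0 : ((edgesBetween ends (V₁ \ V₂) (V₂ \ V₁)).ncard : ℝ) = 0 := by
    simp only [betaZero] at hz₁ hz₂ hBU hBun
    linarith
  have hdset : edgesBetween ends (V₁ \ V₂) (V₂ \ V₁) = ∅ := by
    have h0 : (edgesBetween ends (V₁ \ V₂) (V₂ \ V₁)).ncard = 0 := by exact_mod_cast hd0
    exact (Set.ncard_eq_zero (Set.toFinite _)).mp h0
  have hzU : betaZero ends D φp φm (V₁ ∩ V₂) = 0 := by
    simp only [betaZero] at hz₁ hz₂ hBU hBun ⊢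
    linarith
  have huniv : V₁ ∪ V₂ = Set.univ := by
    by_contra hneq
    have hUcne : (V₁ ∪ V₂)ᶜ.Nonempty := Set.nonempty_compl.mpr hneq
    have hv₁ : v₁ ∈ V₁ ∩ V₂ := ⟨hstar V₁ hex₁, hstar V₂ hex₂⟩
    have hUne : (V₁ ∩ V₂).Nonempty := ⟨v₁, hv₁⟩
    have hUnu : V₁ ∩ V₂ ≠ Set.univ := by
      intro h
      exact hnu₁ (Set.eq_univ_of_univ_subset (by rw [← h]; exact Set.inter_subset_left))
    have hpU : 0 < beta ends D φp (V₁ ∩ V₂) := hA _ hUne hUnu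
    have hmU : beta ends D φm (V₁ ∩ V₂) < 0 := by
      simp only [betaZero] at hzU
      linarith
    obtain ⟨W, hWU, hWne, hWconn, hWE, hWm⟩ :=
      exists_neg_component ends D φm (V₁ ∩ V₂).ncard (V₁ ∩ V₂) le_rfl hUne hmU
    have hWV₁ : W ⊆ V₁ := hWU.trans Set.inter_subset_left
    have hWnu : W ≠ Set.univ := by
      intro h
      exact hnu₁ (Set.eq_univ_of_univ_subset (by rw [← h]; exact hWV₁))
    have hWp : 0 < beta ends D φp W := hA W hWne hWnu
    have hWext : Extremal ends D φp φm W := ⟨hWne, hWnu, hWp, hWm⟩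
    have hUcconn : IsConnectedOn ends (V₁ ∩ V₂)ᶜ := by
      rw [Set.compl_inter]
      exact isConnectedOn_union hcc₁ hcc₂ (by rwa [← Set.compl_union])
    have hWcc : IsConnectedOn ends Wᶜ := isConnectedOn_compl hconn hWU hWE hUcconn
    have hWextSet : W ∈ extSet ends D φp φm := ⟨hWext, hWconn, hWcc⟩
    have hWL : W ∈ L := hb W hWextSet hWU
    obtain ⟨e, heα, heW⟩ : ∃ e, e ∈ (⋃ V ∈ L, α V) ∧ e ∈ edgesBetween ends W Wᶜ := by
      by_cases hαW : α W = ∅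
      · obtain ⟨V', hV'ext, hV'ss, e, heV', heW⟩ := (hα.2 W hWL).mp hαW
        have hV'L : V' ∈ L := hL.2 W hWL V' hV'ext hV'ss.subset
        exact ⟨e, Set.mem_biUnion hV'L heV', heW⟩
      · obtain ⟨e, he⟩ := Set.nonempty_iff_ne_empty.mpr hαW
        exact ⟨e, Set.mem_biUnion hWL he, hα.1 W hWL he⟩
    obtain ⟨a, b, he, haW, hbW⟩ := heW
    have hnot₁ : e ∉ edgesBetween ends V₁ V₁ᶜ := fun h =>
      (Set.eq_empty_iff_forall_notMem.mp ha₁ e) ⟨h, heα⟩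
    have hnot₂ : e ∉ edgesBetween ends V₂ V₂ᶜ := fun h =>
      (Set.eq_empty_iff_forall_notMem.mp ha₂ e) ⟨h, heα⟩
    have haU : a ∈ V₁ ∩ V₂ := hWU haW
    have hbV₁ : b ∈ V₁ := by
      by_contra h
      exact hnot₁ ⟨a, b, he, haU.1, h⟩
    have hbV₂ : b ∈ V₂ := by
      by_contra h
      exact hnot₂ ⟨a, b, he, haU.2, h⟩
    have : e ∈ edgesBetween ends W ((V₁ ∩ V₂) \ W) :=
      ⟨a, b, he, haW, ⟨⟨hbV₁, hbV₂⟩, hbW⟩⟩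
    rw [hWE] at this
    exact this
  refine ⟨huniv, ?_⟩
  ext e
  simp only [Set.mem_inter_iff, Set.mem_empty_iff_false, iff_false, not_and]
  rintro ⟨a, b, he, ha1, hb1⟩ ⟨c, d, hcd, hc2, hd2⟩
  have hbV₂ : b ∈ V₂ := by
    have hmem : b ∈ V₁ ∪ V₂ := by rw [huniv]; trivial
    rcases hmem with h | h
    · exact absurd h hb1
    · exact h
  have hcd' : s(a, b) = s(c, d) := he.symm.trans hcd
  rw [Sym2.eq_iff] at hcd'
  rcases hcd' with ⟨rfl, rfl⟩ | ⟨rfl, rfl⟩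
  · exact hd2 hbV₂
  · have : e ∈ edgesBetween ends (V₁ \ V₂) (V₂ \ V₁) :=
      ⟨a, b, he, ⟨ha1, hd2⟩, ⟨hc2, hb1⟩⟩
    rw [hdset] at this
    exact this


end Paper
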